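/- Let G : ℕ → ℂ satisfy G(i+2) = G(i+1) + G(i) for all i ≥ 0, and define A : ℕ → ℚ recursively by A(m) = −δ_{m,0} − ∑_{j=0}^{m−1} C(m, j)·(2^{m−j} + 1)·A(j). Then for all nonnegative integers k and r, ∑_{j=0}^{k} j^r · G(j) = −G(0) · ∑_{m=0}^{r} C(r, m)·(1 − δ_{r,m})·A(m) + G(1) · ∑_{m=0}^{r} C(r, m)·A(m) − G(k) · ∑_{m=0}^{r} C(r, m)·(k+2)^m·A(r−m) − G(k+1) · ∑_{m=0}^{r} C(r, m)·(k+1)^m·A(r−m), with the convention 0⁰ = 1. -/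

import Mathlib

private lemma aux1 (B : ℕ → ℂ)
    (hB : ∀ m, B m = -(if m = 0 then 1 else 0) -
      ∑ j ∈ Finset.range m, (m.choose j : ℂ) * (2 ^ (m - j) + 1) * B j) (s : ℕ) :
    ∑ i ∈ Finset.range (s + 1), (s.choose i : ℂ) * (2 ^ i + 1) * B (s - i)
      = B s - (if s = 0 then 1 else 0) := by
  rw [← Finset.sum_range_reflect]
  have h : ∀ i ∈ Finset.range (s + 1),
      (s.choose (s + 1 - 1 - i) : ℂ) * (2 ^ (s + 1 - 1 - i) + 1) * B (s - (s + 1 - 1 - i))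
      = (s.choose i : ℂ) * (2 ^ (s - i) + 1) * B i := by
    intro i hi
    rw [Finset.mem_range, Nat.lt_succ_iff] at hi
    rw [Nat.succ_sub_one, Nat.choose_symm hi, Nat.sub_sub_self hi]
  rw [Finset.sum_congr rfl h, Finset.sum_range_succ, hB s]
  simp [Nat.choose_self, Nat.sub_self]
  ring

private lemma aux2 (B : ℕ → ℂ) (r : ℕ) (x : ℂ) :
    ∑ m ∈ Finset.range (r + 1), (r.choose m : ℂ) * x ^ m * B (r - m)
      = ∑ m ∈ Finset.range (r + 1), (r.choose m : ℂ) * x ^ (r - m) * B m := by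
  rw [← Finset.sum_range_reflect]
  refine Finset.sum_congr rfl fun i hi => ?_
  rw [Finset.mem_range, Nat.lt_succ_iff] at hi
  rw [Nat.succ_sub_one, Nat.choose_symm hi, Nat.sub_sub_self hi]

private lemma key (B : ℕ → ℂ)
    (hB : ∀ m, B m = -(if m = 0 then 1 else 0) -
      ∑ j ∈ Finset.range m, (m.choose j : ℂ) * (2 ^ (m - j) + 1) * B j) (r : ℕ) (x : ℂ) :
    (∑ m ∈ Finset.range (r + 1), (r.choose m : ℂ) * (x + 2) ^ m * B (r - m))
      + ∑ m ∈ Finset.range (r + 1), (r.choose m : ℂ) * (x + 1) ^ m * B (r - m)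
    = (∑ m ∈ Finset.range (r + 1), (r.choose m : ℂ) * x ^ m * B (r - m)) - x ^ r := by
  have expand : ∀ m ∈ Finset.range (r + 1),
      (r.choose m : ℂ) * (x + 2) ^ m * B (r - m) + (r.choose m : ℂ) * (x + 1) ^ m * B (r - m)
      = ∑ j ∈ Finset.range (r + 1),
          (r.choose m : ℂ) * (m.choose j : ℂ) * x ^ j * (2 ^ (m - j) + 1) * B (r - m) := by
    intro m hm
    rw [Finset.mem_range, Nat.lt_succ_iff] at hm
    have h1 : (r.choose m : ℂ) * (x + 2) ^ m * B (r - m)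
        + (r.choose m : ℂ) * (x + 1) ^ m * B (r - m)
        = ∑ j ∈ Finset.range (m + 1),
            (r.choose m : ℂ) * (m.choose j : ℂ) * x ^ j * (2 ^ (m - j) + 1) * B (r - m) := by
      rw [add_pow, add_pow, Finset.mul_sum, Finset.sum_mul, Finset.mul_sum, Finset.sum_mul,
        ← Finset.sum_add_distrib]
      refine Finset.sum_congr rfl fun j hj => ?_
      simp only [one_pow]
      ring
    rw [h1]
    refine Finset.sum_subset (Finset.range_subset_range.mpr (by omega)) ?_
    intro j hj hj2
    rw [Finset.mem_range] at hj hj2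
    rw [Nat.choose_eq_zero_of_lt (show m < j by omega)]
    simp
  rw [← Finset.sum_add_distrib, Finset.sum_congr rfl expand, Finset.sum_comm]
  have inner : ∀ j ∈ Finset.range (r + 1),
      (∑ m ∈ Finset.range (r + 1),
        (r.choose m : ℂ) * (m.choose j : ℂ) * x ^ j * (2 ^ (m - j) + 1) * B (r - m))
      = (r.choose j : ℂ) * x ^ j * (B (r - j) - (if r - j = 0 then 1 else 0)) := by
    intro j hj
    rw [Finset.mem_range, Nat.lt_succ_iff] at hj
    rw [Finset.range_eq_Ico, ← Finset.sum_Ico_consecutive _ (Nat.zero_le j) (by omega : j ≤ r + 1)]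
    have hz : (∑ m ∈ Finset.Ico 0 j,
        (r.choose m : ℂ) * (m.choose j : ℂ) * x ^ j * (2 ^ (m - j) + 1) * B (r - m)) = 0 := by
      refine Finset.sum_eq_zero fun m hm => ?_
      rw [Finset.mem_Ico] at hm
      rw [Nat.choose_eq_zero_of_lt (show m < j from hm.2)]
      simp
    rw [hz, zero_add, Finset.sum_Ico_eq_sum_range]
    rw [show r + 1 - j = (r - j) + 1 by omega]
    have congr1 : ∀ i ∈ Finset.range ((r - j) + 1),
        (r.choose (j + i) : ℂ) * ((j + i).choose j : ℂ) * x ^ j * (2 ^ ((j + i) - j) + 1)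
            * B (r - (j + i))
        = ((r.choose j : ℂ) * x ^ j) * (((r - j).choose i : ℂ) * (2 ^ i + 1) * B ((r - j) - i)) := by
      intro i hi
      rw [Finset.mem_range, Nat.lt_succ_iff] at hi
      have h2 : r.choose (j + i) * (j + i).choose j = r.choose j * (r - j).choose i := by
        rw [Nat.choose_mul (Nat.le_add_right j i), Nat.add_sub_cancel_left]
      have h2c : (r.choose (j + i) : ℂ) * ((j + i).choose j : ℂ)
          = (r.choose j : ℂ) * ((r - j).choose i : ℂ) := by exact_mod_cast congrArg Nat.cast h2
      rw [show (j + i) - j = i by omega, show r - (j + i) = (r - j) - i by omega]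
      linear_combination (x ^ j * (2 ^ i + 1) * B ((r - j) - i)) * h2c
    rw [Finset.sum_congr rfl congr1, ← Finset.mul_sum, aux1 B hB (r - j)]
  rw [Finset.sum_congr rfl inner]
  simp only [mul_sub]
  rw [Finset.sum_sub_distrib]
  have last : (∑ j ∈ Finset.range (r + 1),
      (r.choose j : ℂ) * x ^ j * (if r - j = 0 then 1 else 0)) = x ^ r := by
    have h : ∀ j ∈ Finset.range (r + 1),
        (r.choose j : ℂ) * x ^ j * (if r - j = 0 then 1 else 0)
        = if j = r then (r.choose j : ℂ) * x ^ j else 0 := by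
      intro j hj
      rw [Finset.mem_range, Nat.lt_succ_iff] at hj
      by_cases h : j = r
      · simp [h]
      · have : r - j ≠ 0 := by omega
        simp [h, this]
    rw [Finset.sum_congr rfl h, Finset.sum_ite_eq' (Finset.range (r + 1)) r]
    simp
  rw [last]

theorem unweighted_sum_formula (G : ℕ → ℂ) (hG : ∀ i, G (i + 2) = G (i + 1) + G i)
    (A : ℕ → ℚ)
    (hA : ∀ m, A m = -(if m = 0 then 1 else 0) -
      ∑ j ∈ Finset.range m, (m.choose j : ℚ) * (2 ^ (m - j) + 1) * A j)
    (k r : ℕ) :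
    ∑ j ∈ Finset.range (k + 1), (j : ℂ) ^ r * G j =
      -G 0 * ∑ m ∈ Finset.range (r + 1),
          (r.choose m : ℂ) * (1 - if r = m then 1 else 0) * (A m : ℂ)
      + G 1 * ∑ m ∈ Finset.range (r + 1), (r.choose m : ℂ) * (A m : ℂ)
      - G k * ∑ m ∈ Finset.range (r + 1),
          (r.choose m : ℂ) * ((k : ℂ) + 2) ^ m * (A (r - m) : ℂ)
      - G (k + 1) * ∑ m ∈ Finset.range (r + 1),
          (r.choose m : ℂ) * ((k : ℂ) + 1) ^ m * (A (r - m) : ℂ) := by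
  have hB : ∀ m, ((A m : ℂ)) = -(if m = 0 then 1 else 0) -
      ∑ j ∈ Finset.range m, (m.choose j : ℂ) * (2 ^ (m - j) + 1) * (A j : ℂ) := by
    intro m
    rw [hA m]
    push_cast [apply_ite (fun q : ℚ => (q : ℂ))]
    ring
  induction k with
  | zero =>
    rw [Finset.sum_range_one]
    push_cast
    have e1 : (∑ m ∈ Finset.range (r + 1), (r.choose m : ℂ) * (A m : ℂ))
        = ∑ m ∈ Finset.range (r + 1),
            (r.choose m : ℂ) * ((0 : ℂ) + 1) ^ m * (A (r - m) : ℂ) := by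
      rw [aux2 (fun m => (A m : ℂ)) r ((0 : ℂ) + 1)]
      simp
    have e2 : (0 : ℂ) ^ r
        = -(∑ m ∈ Finset.range (r + 1),
              (r.choose m : ℂ) * (1 - if r = m then 1 else 0) * (A m : ℂ))
          - ∑ m ∈ Finset.range (r + 1),
              (r.choose m : ℂ) * ((0 : ℂ) + 2) ^ m * (A (r - m) : ℂ) := by
      rw [aux2 (fun m => (A m : ℂ)) r ((0 : ℂ) + 2)]
      rw [Finset.sum_range_succ, Finset.sum_range_succ]
      have r2 : ∀ m ∈ Finset.range r,
          (r.choose m : ℂ) * (1 - if r = m then 1 else 0) * (A m : ℂ)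
          = (r.choose m : ℂ) * (A m : ℂ) := by
        intro m hm
        rw [Finset.mem_range] at hm
        rw [if_neg (by omega)]
        ring
      rw [Finset.sum_congr rfl r2]
      have r3 := hB r
      have r4 : (∑ j ∈ Finset.range r, (r.choose j : ℂ) * (2 ^ (r - j) + 1) * (A j : ℂ))
          = (∑ m ∈ Finset.range r, (r.choose m : ℂ) * ((0 : ℂ) + 2) ^ (r - m) * (A m : ℂ))
            + ∑ m ∈ Finset.range r, (r.choose m : ℂ) * (A m : ℂ) := by
        rw [← Finset.sum_add_distrib]
        refine Finset.sum_congr rfl fun m hm => ?_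
        norm_num
        ring
      rw [zero_pow_eq]
      simp only [Nat.choose_self, Nat.cast_one, Nat.sub_self, pow_zero, eq_self_iff_true, if_true]
      linear_combination r3 - r4
    linear_combination G 0 * e2 - G 1 * e1
  | succ k ih =>
    rw [Finset.sum_range_succ, ih, show k + 1 + 1 = k + 2 from rfl, hG k]
    push_cast
    rw [show (k : ℂ) + 1 + 1 = (k : ℂ) + 2 from by ring]
    have hkey := key (fun m => (A m : ℂ)) hB r ((k : ℂ) + 1)
    rw [show (k : ℂ) + 1 + 1 = (k : ℂ) + 2 from by ring] at hkey
    linear_combination G (k + 1) * hkey
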